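/- Let n be even and ξ ∈ F_{2^n} nonzero. If Tr(ξ^{-1}) = 1 (where Tr is the absolute trace from F_{2^n} to F_2), then the polynomial x^3 + x + ξ has exactly one root in F_{2^n}. -/

import Mathlib

open Polynomial Finset

namespace Stmt4Aux

variable {F : Type*} [Field F]

noncomputable def Tr (n : ℕ) (x : F) : F := ∑ i ∈ Finset.range n, x ^ 2 ^ i

lemma two_eq_zero [Fintype F] {n : ℕ} (hn : 0 < n) (hF : Fintype.card F = 2 ^ n) :
    (2 : F) = 0 := by
  have h := FiniteField.cast_card_eq_zero F
  rw [hF] at h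
  push_cast at h
  exact (pow_eq_zero_iff hn.ne').mp h

lemma frob {x y : F} (h2 : (2 : F) = 0) (k : ℕ) :
    (x + y) ^ 2 ^ k = x ^ 2 ^ k + y ^ 2 ^ k := by
  induction k with
  | zero => simp
  | succ k ih =>
      have : (2:ℕ) ^ (k+1) = 2 ^ k * 2 := by ring
      rw [this, pow_mul, pow_mul, pow_mul, ih]
      ring_nf
      linear_combination (x ^ 2 ^ k * y ^ 2 ^ k) * h2

lemma Tr_add {n : ℕ} (h2 : (2 : F) = 0) (x y : F) :
    Tr n (x + y) = Tr n x + Tr n y := by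
  simp only [Tr, frob h2, Finset.sum_add_distrib]

lemma Tr_sq [Fintype F] {n : ℕ} (hF : Fintype.card F = 2 ^ n) (x : F) :
    Tr n (x ^ 2) = Tr n x := by
  have hxq : x ^ 2 ^ n = x := by rw [← hF]; exact FiniteField.pow_card x
  have h1 : ∀ i, (x ^ 2) ^ 2 ^ i = x ^ 2 ^ (i + 1) := by
    intro i; rw [← pow_mul]; ring_nf
  have h2 : Tr n (x ^ 2) + x ^ 2 ^ 0 = Tr n x + x ^ 2 ^ n := by
    unfold Tr
    simp only [h1]
    rw [← Finset.sum_range_succ' (fun i => x ^ 2 ^ i) n, Finset.sum_range_succ]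
  rw [hxq, pow_zero, pow_one] at h2
  exact add_right_cancel h2

lemma Tr_self_add_sq [Fintype F] {n : ℕ} (hF : Fintype.card F = 2 ^ n) (h2 : (2 : F) = 0) (x : F) :
    Tr n (x + x ^ 2) = 0 := by
  rw [Tr_add h2, Tr_sq hF]
  linear_combination (Tr n x) * h2

lemma Tr_one {n : ℕ} (hne : Even n) (h2 : (2 : F) = 0) : Tr n (1 : F) = 0 := by
  obtain ⟨m, hm⟩ := hne
  simp only [Tr, one_pow, Finset.sum_const, Finset.card_range, nsmul_eq_mul, mul_one]
  rw [hm]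
  push_cast
  linear_combination (m : F) * h2

lemma one_add_ne_zero (h2 : (2 : F) = 0) {x : F} (hx1 : x ≠ 1) : x + 1 ≠ 0 := by
  intro h
  exact hx1 (by linear_combination h - h2)

lemma cube_ne_zero (h2 : (2 : F) = 0) {x : F} (hx0 : x ≠ 0) (hx1 : x ≠ 1) :
    x ^ 3 + x ≠ 0 := by
  have hx1' := one_add_ne_zero h2 hx1
  have : x ^ 3 + x = x * (x + 1) ^ 2 := by linear_combination (-(x^2)) * h2
  rw [this]
  exact mul_ne_zero hx0 (pow_ne_zero _ hx1')

lemma Tr_inv_cube [Fintype F] {n : ℕ} (hF : Fintype.card F = 2 ^ n) (h2 : (2 : F) = 0)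
    {x : F} (hx0 : x ≠ 0) (hx1 : x ≠ 1) :
    Tr n ((x ^ 3 + x)⁻¹) = Tr n x⁻¹ := by
  have hx1' := one_add_ne_zero h2 hx1
  have hg := cube_ne_zero h2 hx0 hx1
  have key : (x ^ 3 + x)⁻¹ = x⁻¹ + ((x + 1)⁻¹ + ((x + 1)⁻¹) ^ 2) := by
    rw [show x ^ 3 + x = x * (x + 1) ^ 2 by linear_combination (-(x^2)) * h2]
    field_simp
    ring_nf
    linear_combination (-(2*x) - x^2) * h2
  rw [key, Tr_add h2, Tr_self_add_sq hF h2, add_zero]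

/-- uniqueness of roots -/
lemma unique_root [Fintype F] {n : ℕ} (hne : Even n) (hF : Fintype.card F = 2 ^ n)
    (h2 : (2 : F) = 0) {ξ x₀ x₁ : F} (hξ : ξ ≠ 0) (htr : Tr n ξ⁻¹ = 1)
    (h0 : x₀ ^ 3 + x₀ + ξ = 0) (h1 : x₁ ^ 3 + x₁ + ξ = 0) : x₀ = x₁ := by
  by_contra hne'
  have hx00 : x₀ ≠ 0 := by rintro rfl; apply hξ; linear_combination h0
  have hx01 : x₀ ≠ 1 := by rintro rfl; apply hξ; linear_combination h0 - h2
  have hξ0 : ξ = x₀ ^ 3 + x₀ := by linear_combination -h0 + ξ * h2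
  -- quadratic relation
  have hquad : x₁ ^ 2 + x₀ * x₁ + x₀ ^ 2 + 1 = 0 := by
    have hd : (x₁ + x₀) * (x₁ ^ 2 + x₀ * x₁ + x₀ ^ 2 + 1) = 0 := by
      linear_combination h1 - h0 + (x₀^3 + x₀ + x₀*x₁^2 + x₀^2*x₁) * h2
    rcases mul_eq_zero.mp hd with h | h
    · exact absurd (show x₀ = x₁ by linear_combination h - x₁ * h2) hne'
    · exact h
  have hx0i : x₀ * x₀⁻¹ = 1 := mul_inv_cancel₀ hx00
  have hw : (x₁ * x₀⁻¹) + (x₁ * x₀⁻¹) ^ 2 = 1 + (x₀⁻¹) ^ 2 := by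
    linear_combination ((x₀⁻¹) ^ 2) * hquad + (-(x₁ * x₀⁻¹) - x₀ * x₀⁻¹ - 1) * hx0i + (-1 - (x₀⁻¹) ^ 2) * h2
  have htr0 : Tr n (1 + (x₀⁻¹) ^ 2) = 0 := by
    rw [← hw]; exact Tr_self_add_sq hF h2 _
  have htr1 : Tr n (1 + (x₀⁻¹) ^ 2) = Tr n ξ⁻¹ := by
    rw [Tr_add h2, Tr_one hne h2, Tr_sq hF, zero_add, hξ0, Tr_inv_cube hF h2 hx00 hx01]
  rw [htr1, htr] at htr0
  exact one_ne_zero htr0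

lemma exists_root [Fintype F] [DecidableEq F] {n : ℕ} (hne : Even n)
    (hF : Fintype.card F = 2 ^ n) (h2 : (2 : F) = 0) {ξ : F} (hξ : ξ ≠ 0)
    (htr : Tr n ξ⁻¹ = 1) : ∃ x : F, x ^ 3 + x + ξ = 0 := by
  classical
  set S : Finset F := Finset.univ.filter (fun x => x ≠ 0 ∧ Tr n x⁻¹ = 1) with hS
  have hmemS : ∀ x : F, x ∈ S ↔ x ≠ 0 ∧ Tr n x⁻¹ = 1 := by
    intro x; simp [hS]
  have hne1 : ∀ x ∈ S, x ≠ 1 := by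
    intro x hx
    rw [hmemS] at hx
    intro h; rw [h] at hx
    rw [inv_one, Tr_one hne h2] at hx
    exact one_ne_zero hx.2.symm
  set g : F → F := fun x => x ^ 3 + x with hg
  have hmaps : ∀ x ∈ S, g x ∈ S := by
    intro x hx
    have hx1 := hne1 x hx
    rw [hmemS] at hx ⊢
    refine ⟨cube_ne_zero h2 hx.1 hx1, ?_⟩
    rw [hg]
    simp only
    rw [Tr_inv_cube hF h2 hx.1 hx1]
    exact hx.2
  have hinj : Set.InjOn g S := by
    intro x hx y hy hxy
    have hgx := hmaps x hx
    rw [hmemS] at hgx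
    have h0 : x ^ 3 + x + (g x) = 0 := by
      rw [hg]; simp only; linear_combination (x^3 + x) * h2
    have h1 : y ^ 3 + y + (g x) = 0 := by
      rw [hxy, hg]; simp only; linear_combination (y^3 + y) * h2
    exact unique_root hne hF h2 hgx.1 hgx.2 h0 h1
  have himg : S.image g = S := by
    apply Finset.eq_of_subset_of_card_le
    · intro y hy
      obtain ⟨x, hx, rfl⟩ := Finset.mem_image.mp hy
      exact hmaps x hx
    · rw [Finset.card_image_of_injOn hinj]
  have hξS : ξ ∈ S := (hmemS ξ).mpr ⟨hξ, htr⟩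
  rw [← himg] at hξS
  obtain ⟨x, _, hx⟩ := Finset.mem_image.mp hξS
  exact ⟨x, by rw [← hx, hg]; simp only; linear_combination (x^3 + x) * h2⟩

end Stmt4Aux

open Stmt4Aux in
theorem stmt_4 (n : ℕ) (hn : 0 < n) (hne : Even n) (F : Type*) [Field F] [Fintype F] [DecidableEq F]
    (hF : Fintype.card F = 2 ^ n) (ξ : F) (hξ : ξ ≠ 0)
    (htr : ∑ i ∈ Finset.range n, ξ⁻¹ ^ 2 ^ i = 1) :
    (X ^ 3 + X + C ξ : F[X]).roots.toFinset.card = 1 := by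
  have h2 : (2 : F) = 0 := two_eq_zero hn hF
  have htr' : Tr n ξ⁻¹ = 1 := htr
  obtain ⟨x₀, hx₀⟩ := exists_root hne hF h2 hξ htr'
  have hp : (X ^ 3 + X + C ξ : F[X]) ≠ 0 := by
    intro h
    have := congrArg (fun p => Polynomial.coeff p 3) h
    simp [Polynomial.coeff_X] at this
  rw [Finset.card_eq_one]
  refine ⟨x₀, ?_⟩
  ext y
  simp only [Multiset.mem_toFinset, Finset.mem_singleton, mem_roots hp, IsRoot.def,
    eval_add, eval_pow, eval_X, eval_C]
  constructor
  · intro hy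
    exact (unique_root hne hF h2 hξ htr' hx₀ hy).symm
  · rintro rfl
    exact hx₀
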